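/- Let S be a commutative ring, I ⊆ S an ideal, and m ∈ S. The multiplication-by-m map μ : S/(I : m) → S/I, x + (I : m) ↦ mx + I, is a well-defined injective S-module homomorphism. Let K be a free resolution of S/(I : m), let F be a free resolution of S/I, and let f : K → F be a chain map whose induced map on 0-th homology is μ. Then the mapping cone C(f), with C(f)_n = F_n ⊕ K_{n−1} and differential d(x, y) = (f(y) + d_F(x), −d_K(y)), is a free resolution of S/(I + (m)). -/

import Mathlib

open CategoryTheory CategoryTheory.Limits

universe u

variable {S : Type u} [CommRing S]

/-- The linear map `(g, f) ↦ - d_F f` on a product, used as the second component of the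
differential of a mapping cone. -/
def negDsnd (F : ChainComplex (ModuleCat.{u} S) ℕ) (n : ℕ) (A : Type u)
    [AddCommGroup A] [Module S A] : (A × F.X (n + 1)) →ₗ[S] F.X n where
  toFun x := -(F.d (n + 1) n x.2)
  map_add' x y := by simp [neg_add]; abel
  map_smul' c x := by simp

@[simp] lemma negDsnd_apply (F : ChainComplex (ModuleCat.{u} S) ℕ) (n : ℕ) (A : Type u)
    [AddCommGroup A] [Module S A] (x : A × F.X (n + 1)) :
    negDsnd F n A x = -(F.d (n + 1) n x.2) := rfl

/-- The underlying modules of the mapping cone of a chain map `h : F ⟶ G` of ℕ-indexed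
chain complexes: `C(h)ₙ = Gₙ ⊕ F_{n-1}`, where `F_{-1} = 0`. -/
def coneX (F G : ChainComplex (ModuleCat.{u} S) ℕ) : ℕ → ModuleCat.{u} S
  | 0 => G.X 0
  | (n + 1) => ModuleCat.of S (G.X (n + 1) × F.X n)

/-- The differential of the mapping cone of `h : F ⟶ G`: `d (g, f) = (h f + d_G g, - d_F f)`. -/
def coneD (F G : ChainComplex (ModuleCat.{u} S) ℕ) (h : F ⟶ G) :
    ∀ n : ℕ, coneX F G (n + 1) ⟶ coneX F G n
  | 0 => ModuleCat.ofHom (LinearMap.coprod (G.d 1 0).hom (h.f 0).hom)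
  | (n + 1) => ModuleCat.ofHom
      (LinearMap.prod
        (LinearMap.coprod (G.d (n + 2) (n + 1)).hom (h.f (n + 1)).hom)
        (negDsnd F n (G.X (n + 2))))

theorem coneD_comp (F G : ChainComplex (ModuleCat.{u} S) ℕ) (h : F ⟶ G) :
    ∀ n : ℕ, coneD F G h (n + 1) ≫ coneD F G h n = 0 := by
  have dG0 : ∀ (i j k : ℕ) (y : G.X i), (G.d j k).hom ((G.d i j).hom y) = 0 := by
    intro i j k y
    rw [← LinearMap.comp_apply, ← ModuleCat.hom_comp, G.d_comp_d i j k]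
    rfl
  have dF0 : ∀ (i j k : ℕ) (y : F.X i), (F.d j k).hom ((F.d i j).hom y) = 0 := by
    intro i j k y
    rw [← LinearMap.comp_apply, ← ModuleCat.hom_comp, F.d_comp_d i j k]
    rfl
  have hc : ∀ (i j : ℕ) (y : F.X i), (G.d i j).hom ((h.f i).hom y) = (h.f j).hom ((F.d i j).hom y) := by
    intro i j y
    rw [← LinearMap.comp_apply, ← ModuleCat.hom_comp, ← LinearMap.comp_apply,
      ← ModuleCat.hom_comp, h.comm i j]
  intro n
  match n with
  | 0 =>
    apply ModuleCat.hom_ext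
    show (LinearMap.coprod (G.d 1 0).hom (h.f 0).hom).comp
        (LinearMap.prod (LinearMap.coprod (G.d 2 1).hom (h.f 1).hom) (negDsnd F 0 (G.X 2))) = 0
    apply LinearMap.ext
    rintro ⟨xg, xf⟩
    simp only [LinearMap.comp_apply, LinearMap.prod_apply, Function.prod, LinearMap.coprod_apply,
      negDsnd_apply, LinearMap.zero_apply, map_add, map_neg, Prod.fst_zero, Prod.snd_zero]
    rw [dG0, hc]
    abel
  | (m + 1) =>
    apply ModuleCat.hom_ext
    show (LinearMap.prod (LinearMap.coprod (G.d (m + 2) (m + 1)).hom (h.f (m + 1)).hom)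
          (negDsnd F m (G.X (m + 2)))).comp
        (LinearMap.prod (LinearMap.coprod (G.d (m + 3) (m + 2)).hom (h.f (m + 2)).hom)
          (negDsnd F (m + 1) (G.X (m + 3)))) = 0
    apply LinearMap.ext
    rintro ⟨xg, xf⟩
    simp only [LinearMap.comp_apply, LinearMap.prod_apply, Function.prod, LinearMap.coprod_apply,
      negDsnd_apply, LinearMap.zero_apply, map_add, map_neg, Prod.fst_zero, Prod.snd_zero]
    refine Prod.ext ?_ ?_
    · simp only [Prod.fst_zero]
      rw [dG0, hc]
      abel
    · simp only [Prod.snd_zero]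
      rw [dF0]
      simp

/-- The mapping cone of a chain map `f : K ⟶ F` of ℕ-indexed chain complexes of
`S`-modules: `C(f)ₙ = Fₙ ⊕ K_{n-1}` with differential `d (x, y) = (f y + d_F x, - d_K y)`. -/
noncomputable def mappingCone (K F : ChainComplex (ModuleCat.{u} S) ℕ) (f : K ⟶ F) :
    ChainComplex (ModuleCat.{u} S) ℕ :=
  ChainComplex.of (coneX K F) (coneD K F f) (coneD_comp K F f)


section Aux

variable (C : ChainComplex (ModuleCat.{u} S) ℕ)

/-- The canonical projection `C.X 0 ⟶ C.homology 0` for an `ℕ`-indexed chain complex of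
modules. -/
noncomputable def pi0 : C.X 0 ⟶ C.homology 0 :=
  C.pOpcycles 0 ≫ C.isoHomologyι₀.inv

lemma pi0_surjective : Function.Surjective (pi0 C) := by
  have : Epi (pi0 C) := epi_comp _ _
  exact (ModuleCat.epi_iff_surjective _).mp this

lemma pi0_d (y : C.X 1) : pi0 C (C.d 1 0 y) = 0 := by
  have h : C.d 1 0 ≫ pi0 C = 0 := by
    rw [pi0, ← Category.assoc, HomologicalComplex.d_pOpcycles, zero_comp]
  exact congrArg (fun g => ModuleCat.Hom.hom g y) h

lemma pi0_ker (x : C.X 0) (hx : pi0 C x = 0) : ∃ y, C.d 1 0 y = x := by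
  have hmono : Function.Injective (C.isoHomologyι₀.inv) :=
    (ModuleCat.mono_iff_injective _).mp inferInstance
  have h1 : C.pOpcycles 0 x = 0 := by
    apply hmono
    rw [map_zero]
    exact hx
  have hprev : (ComplexShape.down ℕ).prev 0 = 1 := ChainComplex.prev ℕ 0
  let hc := C.opcyclesIsCokernel 1 0 hprev
  let hc' := ModuleCat.cokernelIsColimit (C.d 1 0)
  have he : C.pOpcycles 0 ≫ (hc.coconePointUniqueUpToIso hc').hom
      = ModuleCat.ofHom (LinearMap.range (C.d 1 0).hom).mkQ :=
    hc.comp_coconePointUniqueUpToIso_hom hc' WalkingParallelPair.one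
  have h2 : (LinearMap.range (C.d 1 0).hom).mkQ x = 0 := by
    have h3 := congrArg (fun g => ModuleCat.Hom.hom g x) he
    have h4 : (hc.coconePointUniqueUpToIso hc').hom (C.pOpcycles 0 x)
        = (LinearMap.range (C.d 1 0).hom).mkQ x := h3
    rw [← h4, h1, map_zero]
    rfl
  rwa [Submodule.mkQ_apply, Submodule.Quotient.mk_eq_zero] at h2

variable {C} in
lemma pi0_naturality {D : ChainComplex (ModuleCat.{u} S) ℕ} (φ : C ⟶ D) :
    φ.f 0 ≫ pi0 D = pi0 C ≫ HomologicalComplex.homologyMap φ 0 := by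
  rw [pi0, pi0, ← Category.assoc, ← HomologicalComplex.p_opcyclesMap, Category.assoc,
    Category.assoc, ChainComplex.isoHomologyι₀_inv_naturality]

lemma exact_elem (n : ℕ) (h : IsZero (C.homology (n + 1))) (x : C.X (n + 1))
    (hx : C.d (n + 1) n x = 0) : ∃ y, C.d (n + 2) (n + 1) y = x := by
  have hE : C.ExactAt (n + 1) := (C.exactAt_iff_isZero_homology _).mpr h
  rw [C.exactAt_iff' (n + 2) (n + 1) n (ChainComplex.prev ℕ (n + 1))
    (ChainComplex.next_nat_succ n), ShortComplex.moduleCat_exact_iff] at hE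
  exact hE x hx

end Aux

/-- Let `I ⊆ S` be an ideal and `m ∈ S`.  The multiplication-by-`m` map
`μ : S/(I : m) → S/I` is a well-defined injective `S`-module homomorphism, and for every
free resolution `K` of `S/(I : m)`, every free resolution `F` of `S/I`, and every chain
map `f : K ⟶ F` whose induced map on 0-th homology is `μ`, the mapping cone `C(f)` is a
free resolution of `S/(I + (m))`. -/
theorem mappingCone_free_resolution (I : Ideal S) (m : S) :
    ∃ μ : (S ⧸ I.colon (Ideal.span {m})) →ₗ[S] (S ⧸ I),
      Function.Injective μ ∧
      (∀ x : S, μ (Submodule.Quotient.mk x) = Submodule.Quotient.mk (m * x)) ∧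
      ∀ (K F : ChainComplex (ModuleCat.{u} S) ℕ) (f : K ⟶ F),
        (∀ n, Module.Free S (K.X n)) →
        (∀ n, Module.Free S (F.X n)) →
        (∀ n, 1 ≤ n → IsZero (K.homology n)) →
        (∀ n, 1 ≤ n → IsZero (F.homology n)) →
        ∀ (eK : K.homology 0 ≅ ModuleCat.of S (S ⧸ I.colon (Ideal.span {m})))
          (eF : F.homology 0 ≅ ModuleCat.of S (S ⧸ I)),
          eK.inv ≫ HomologicalComplex.homologyMap f 0 ≫ eF.hom = ModuleCat.ofHom μ →
          (∀ n, Module.Free S ((mappingCone K F f).X n)) ∧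
          (∀ n, 1 ≤ n → IsZero ((mappingCone K F f).homology n)) ∧
          Nonempty ((mappingCone K F f).homology 0 ≅
            ModuleCat.of S (S ⧸ (I + Ideal.span {m}))) := by
  classical
  set Jm : Ideal S := Ideal.span {m} with hJm
  have hker0 : (I.colon Jm : Submodule S S) ≤
      LinearMap.ker ((Submodule.mkQ (I : Submodule S S)).comp (LinearMap.lsmul S S m)) := by
    intro x hx
    rw [LinearMap.mem_ker, LinearMap.comp_apply, LinearMap.lsmul_apply, Submodule.mkQ_apply,
      Submodule.Quotient.mk_eq_zero, smul_eq_mul]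
    have hx' : x * m ∈ I := Ideal.mem_colon_span_singleton.mp hx
    rwa [mul_comm] at hx'
  set μ : (S ⧸ I.colon Jm) →ₗ[S] (S ⧸ I) := Submodule.liftQ _ _ hker0 with hμdef
  have hμmk : ∀ x : S, μ (Submodule.Quotient.mk x) = Submodule.Quotient.mk (m * x) := by
    intro x
    rw [hμdef, Submodule.liftQ_apply, LinearMap.comp_apply, LinearMap.lsmul_apply,
      Submodule.mkQ_apply, smul_eq_mul]
  have hμinj : Function.Injective μ := by
    rw [← LinearMap.ker_eq_bot]
    refine (Submodule.eq_bot_iff _).mpr ?_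
    intro z hz
    obtain ⟨x, rfl⟩ := Submodule.Quotient.mk_surjective _ z
    rw [LinearMap.mem_ker, hμmk, Submodule.Quotient.mk_eq_zero] at hz
    rw [Submodule.Quotient.mk_eq_zero]
    exact Ideal.mem_colon_span_singleton.mpr (by rwa [mul_comm])
  refine ⟨μ, hμinj, hμmk, ?_⟩
  intro K F f hKfree hFfree hKz hFz eK eF hcomp
  -- elementwise consequences of the hypotheses
  have hcommel : ∀ (i j : ℕ) (y : K.X i), F.d i j (f.f i y) = f.f j (K.d i j y) := by
    intro i j y
    have e := f.comm i j
    exact congrArg (fun g => ModuleCat.Hom.hom g y) e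
  have hexK : ∀ (n : ℕ) (y : K.X (n + 1)), K.d (n + 1) n y = 0 →
      ∃ z, K.d (n + 2) (n + 1) z = y :=
    fun n => exact_elem K n (hKz (n + 1) (by omega))
  have hexF : ∀ (n : ℕ) (y : F.X (n + 1)), F.d (n + 1) n y = 0 →
      ∃ z, F.d (n + 2) (n + 1) z = y :=
    fun n => exact_elem F n (hFz (n + 1) (by omega))
  have hcompat : f.f 0 ≫ pi0 F ≫ eF.hom =
      pi0 K ≫ eK.hom ≫ (eK.inv ≫ HomologicalComplex.homologyMap f 0 ≫ eF.hom) := by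
    rw [← Category.assoc, pi0_naturality f]
    simp
  rw [hcomp] at hcompat
  have hnat : ∀ y : K.X 0, eF.hom (pi0 F (f.f 0 y)) = μ (eK.hom (pi0 K y)) := by
    intro y
    have h := congrArg (fun g => ModuleCat.Hom.hom g y) hcompat
    exact h
  have heKinj : Function.Injective eK.hom := (ModuleCat.mono_iff_injective _).mp inferInstance
  have heFinj : Function.Injective eF.hom := (ModuleCat.mono_iff_injective _).mp inferInstance
  have hπFd : ∀ w : F.X 1, eF.hom (pi0 F (F.d 1 0 w)) = 0 := by
    intro w; rw [pi0_d, map_zero]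
  have hπFker : ∀ x : F.X 0, eF.hom (pi0 F x) = 0 → ∃ w, F.d 1 0 w = x := by
    intro x hx
    apply pi0_ker
    apply heFinj
    rw [map_zero]
    exact hx
  have hinj : ∀ y : K.X 0, (∃ w, F.d 1 0 w = f.f 0 y) → ∃ z, K.d 1 0 z = y := by
    rintro y ⟨w, hw⟩
    have h1 : μ (eK.hom (pi0 K y)) = 0 := by rw [← hnat, ← hw, hπFd]
    have h2 : eK.hom (pi0 K y) = 0 := by
      apply hμinj; rw [h1, map_zero]
    have h3 : pi0 K y = 0 := by
      apply heKinj; rw [h2, map_zero]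
    exact pi0_ker K y h3
  have hπKsurj : ∀ c : S ⧸ I.colon Jm, ∃ y : K.X 0, eK.hom (pi0 K y) = c := by
    intro c
    obtain ⟨a, ha⟩ := (ModuleCat.epi_iff_surjective eK.hom).mp inferInstance c
    obtain ⟨b, hb⟩ := pi0_surjective K a
    exact ⟨b, by rw [hb, ha]⟩
  set Cc := mappingCone K F f with hCc
  have hd0 : Cc.d 1 0 = coneD K F f 0 := ChainComplex.of_d (coneX K F) (coneD K F f) 0
  have hdn : ∀ n : ℕ, Cc.d (n + 2) (n + 1) = coneD K F f (n + 1) := fun n =>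
    ChainComplex.of_d (coneX K F) (coneD K F f) (n + 1)
  refine ⟨?_, ?_, ?_⟩
  · -- freeness
    intro n
    match n with
    | 0 => exact hFfree 0
    | (n + 1) =>
      haveI := hFfree (n + 1)
      haveI := hKfree n
      exact (inferInstance : Module.Free S (↑(F.X (n + 1)) × ↑(K.X n)))
  · -- exactness in positive degrees
    intro n hn
    obtain ⟨n, rfl⟩ : ∃ k, n = k + 1 := ⟨n - 1, by omega⟩
    rw [← HomologicalComplex.exactAt_iff_isZero_homology]
    rw [Cc.exactAt_iff' (n + 2) (n + 1) n (ChainComplex.prev ℕ (n + 1))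
      (ChainComplex.next_nat_succ n), ShortComplex.moduleCat_exact_iff]
    intro x hx
    match n with
    | 0 =>
      replace hx : Cc.d 1 0 x = 0 := hx
      rw [hd0] at hx
      obtain ⟨x1, x2⟩ := x
      have hx' : F.d 1 0 x1 + f.f 0 x2 = 0 := hx
      have hz2 : F.d 1 0 (-x1) = f.f 0 x2 := by
        rw [map_neg, neg_eq_iff_add_eq_zero]
        exact hx'
      obtain ⟨z, hz⟩ := hinj x2 ⟨-x1, hz2⟩
      have hx1' : F.d 1 0 (x1 + f.f 1 z) = 0 := by
        rw [map_add, hcommel 1 0 z, hz, hx']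
      obtain ⟨w, hw⟩ := hexF 0 _ hx1'
      show ∃ y, Cc.d 2 1 y = (x1, x2)
      rw [hdn 0]
      refine ⟨(w, -z), ?_⟩
      show (F.d 2 1 w + f.f 1 (-z), -(K.d 1 0 (-z))) = (x1, x2)
      refine Prod.ext ?_ ?_
      · show F.d 2 1 w + f.f 1 (-z) = x1
        rw [map_neg, hw]
        abel
      · show -(K.d 1 0 (-z)) = x2
        rw [map_neg, neg_neg, hz]
    | (k + 1) =>
      replace hx : Cc.d (k + 2) (k + 1) x = 0 := hx
      rw [hdn k] at hx
      obtain ⟨x1, x2⟩ := x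
      have hx' : (F.d (k + 2) (k + 1) x1 + f.f (k + 1) x2, -(K.d (k + 1) k x2)) =
          (0 : ↑(F.X (k + 1)) × ↑(K.X k)) := hx
      have hxa : F.d (k + 2) (k + 1) x1 + f.f (k + 1) x2 = 0 := congrArg Prod.fst hx'
      have hxb : K.d (k + 1) k x2 = 0 := by
        have h := congrArg Prod.snd hx'
        simpa [neg_eq_zero] using h
      obtain ⟨z, hz⟩ := hexK k x2 hxb
      have h1 : F.d (k + 2) (k + 1) (x1 + f.f (k + 2) z) = 0 := by
        rw [map_add, hcommel (k + 2) (k + 1) z, hz, hxa]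
      obtain ⟨w, hw⟩ := hexF (k + 1) _ h1
      show ∃ y, Cc.d (k + 3) (k + 2) y = (x1, x2)
      rw [hdn (k + 1)]
      refine ⟨(w, -z), ?_⟩
      show (F.d (k + 3) (k + 2) w + f.f (k + 2) (-z), -(K.d (k + 2) (k + 1) (-z))) = (x1, x2)
      refine Prod.ext ?_ ?_
      · show F.d (k + 3) (k + 2) w + f.f (k + 2) (-z) = x1
        rw [map_neg, hw]
        abel
      · show -(K.d (k + 2) (k + 1) (-z)) = x2
        rw [map_neg, neg_neg, hz]
  · -- homology in degree 0
    have hq_surj : Function.Surjective (pi0 Cc) := pi0_surjective Cc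
    have hIle : (I : Submodule S S) ≤
        Submodule.comap (LinearMap.id) (((I + Jm : Ideal S) : Submodule S S)) := by
      rw [Submodule.comap_id, Ideal.add_eq_sup]
      exact le_sup_left
    set ψ : (S ⧸ I) →ₗ[S] S ⧸ (I + Jm) :=
      Submodule.mapQ (I : Submodule S S) _ LinearMap.id hIle with hψdef
    have hψmk : ∀ s : S, ψ (Submodule.Quotient.mk s) = Submodule.Quotient.mk s := by
      intro s
      rw [hψdef, Submodule.mapQ_apply, LinearMap.id_apply]
    set πF : ↑(F.X 0) →ₗ[S] S ⧸ I := (pi0 F ≫ eF.hom : F.X 0 ⟶ ModuleCat.of S (S ⧸ I)).hom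
      with hπFdef
    have hπFapp : ∀ x, πF x = eF.hom (pi0 F x) := by
      intro x
      rw [hπFdef]
      rfl
    set φ : ↑(F.X 0) →ₗ[S] S ⧸ (I + Jm) := ψ.comp πF with hφdef
    have hφsurj : Function.Surjective φ := by
      intro c
      obtain ⟨t, ht⟩ := Submodule.Quotient.mk_surjective _ c
      obtain ⟨a, ha⟩ := (ModuleCat.epi_iff_surjective eF.hom).mp inferInstance
        (Submodule.Quotient.mk t)
      obtain ⟨b, hb⟩ := pi0_surjective F a
      refine ⟨b, ?_⟩
      rw [hφdef, LinearMap.comp_apply, hπFapp, hb, ha, hψmk, ht]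
    have hkerφ : LinearMap.ker φ =
        LinearMap.range (F.d 1 0 : F.X 1 ⟶ F.X 0).hom ⊔
        LinearMap.range (f.f 0 : K.X 0 ⟶ F.X 0).hom := by
      ext x
      constructor
      · intro hx
        rw [LinearMap.mem_ker, hφdef, LinearMap.comp_apply] at hx
        obtain ⟨t, ht⟩ := Submodule.Quotient.mk_surjective _ (πF x)
        rw [← ht, hψmk, Submodule.Quotient.mk_eq_zero] at hx
        rw [Ideal.add_eq_sup] at hx
        obtain ⟨a, haI, b, hbJ, hab⟩ := Submodule.mem_sup.mp hx
        obtain ⟨c, hc⟩ := Ideal.mem_span_singleton'.mp hbJ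
        obtain ⟨k0, hk0⟩ := hπKsurj (Submodule.Quotient.mk c)
        have hfk0 : πF (f.f 0 k0) = Submodule.Quotient.mk (m * c) := by
          rw [hπFapp, hnat, hk0, hμmk]
        have hx2 : πF x = Submodule.Quotient.mk (m * c) := by
          rw [← ht, ← hab]
          have h3 : (Submodule.Quotient.mk (a + b) : S ⧸ I) = Submodule.Quotient.mk b := by
            rw [Submodule.Quotient.eq]
            simpa using haI
          rw [h3, ← hc, mul_comm]
        have hx3 : πF (x - f.f 0 k0) = 0 := by
          rw [map_sub, hx2, hfk0, sub_self]
        rw [hπFapp] at hx3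
        obtain ⟨w, hw⟩ := hπFker _ hx3
        refine Submodule.mem_sup.mpr ⟨F.d 1 0 w, ⟨w, rfl⟩, f.f 0 k0, ⟨k0, rfl⟩, ?_⟩
        rw [hw]
        abel
      · intro hx
        obtain ⟨a, ⟨y1, rfl⟩, b, ⟨y2, rfl⟩, rfl⟩ := Submodule.mem_sup.mp hx
        rw [LinearMap.mem_ker, hφdef, LinearMap.comp_apply, map_add, hπFapp, hπFapp]
        obtain ⟨c, hc⟩ := Submodule.Quotient.mk_surjective _ (eK.hom (pi0 K y2))
        have h4 : eF.hom (pi0 F (f.f 0 y2)) = Submodule.Quotient.mk (m * c) := by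
          rw [hnat, ← hc, hμmk]
        rw [hπFd, h4, zero_add, hψmk, Submodule.Quotient.mk_eq_zero, Ideal.add_eq_sup]
        refine Submodule.mem_sup_right ?_
        exact Ideal.mem_span_singleton'.mpr ⟨c, by ring⟩
    have hkerq : LinearMap.ker (show ↑(F.X 0) →ₗ[S] ↑(Cc.homology 0) from (pi0 Cc : Cc.X 0 ⟶ Cc.homology 0).hom) =
        LinearMap.range (F.d 1 0 : F.X 1 ⟶ F.X 0).hom ⊔
        LinearMap.range (f.f 0 : K.X 0 ⟶ F.X 0).hom := by
      ext x
      constructor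
      · intro hx
        obtain ⟨y, hy⟩ := pi0_ker Cc x hx
        rw [hd0] at hy
        obtain ⟨y1, y2⟩ := y
        exact Submodule.mem_sup.mpr ⟨F.d 1 0 y1, ⟨y1, rfl⟩, f.f 0 y2, ⟨y2, rfl⟩, hy⟩
      · intro hx
        obtain ⟨a, ⟨y1, rfl⟩, b, ⟨y2, rfl⟩, rfl⟩ := Submodule.mem_sup.mp hx
        have h5 : Cc.d 1 0 (y1, y2) = F.d 1 0 y1 + f.f 0 y2 := by
          rw [hd0]; rfl
        show pi0 Cc (F.d 1 0 y1 + f.f 0 y2) = 0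
        rw [← h5]
        exact pi0_d Cc (y1, y2)
    have e : (↑(Cc.homology 0) : Type u) ≃ₗ[S] (S ⧸ (I + Jm)) :=
      ((LinearMap.quotKerEquivOfSurjective
          (show ↑(F.X 0) →ₗ[S] ↑(Cc.homology 0) from (pi0 Cc : Cc.X 0 ⟶ Cc.homology 0).hom)
          hq_surj).symm.trans
        (Submodule.quotEquivOfEq _ _ (hkerq.trans hkerφ.symm))).trans
        (LinearMap.quotKerEquivOfSurjective φ hφsurj)
    exact ⟨e.toModuleIso⟩
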